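/- Let N = 4k with k ≥ 1 an integer, group the units into N/2 pairs {2j−1, 2j} for j = 1,…,N/2, and let p be the matched-pair design: p_w = 2^{−N/2} if exactly one unit in each pair is treated under w, and p_w = 0 otherwise (so π_i = 1/2 for all i and Σ_i w_i = N/2 on the support 𝒲). Let G*(w) be the full set of substitutes of each w ∈ 𝒲. Then for every W ∈ 𝒲 and every choice of potential outcomes, the contrast variance estimator computed with G = G* equals the standard matched-pair variance estimator: V̂_sub(W) = (4/(N(N−2)))·Σ_{j=1}^{N/2} (d_j − d̄)², where d_j = (2·W_{2j−1} − 1)·(y_{2j−1}(W) − y_{2j}(W)) is the treated-minus-control observed difference in pair j and d̄ = (2/N)·Σ_{j=1}^{N/2} d_j. -/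

import Mathlib

open Finset
open scoped Classical

noncomputable section

/-- Observed outcome of unit `i` under assignment `w`. -/
def yObs (N : ℕ) (Y1 Y0 : Fin N → ℝ) (w : Fin N → Bool) (i : Fin N) : ℝ :=
  if w i then Y1 i else Y0 i

/-- `l_i(w) = 1` if treated, `−1` if control. -/
def ell (N : ℕ) (w : Fin N → Bool) (i : Fin N) : ℝ :=
  if w i then 1 else -1

/-- The treated set `T(w)`. -/
def Tset (N : ℕ) (w : Fin N → Bool) : Finset (Fin N) :=
  univ.filter fun i => w i = true

/-- The contrast variance estimator. -/
def Vsub (N : ℕ) (p : (Fin N → Bool) → ℝ) (Y1 Y0 : Fin N → ℝ)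
    (G : (Fin N → Bool) → Finset (Fin N → Bool)) (W : Fin N → Bool) : ℝ :=
  (4 / (N : ℝ) ^ 2) * ∑ w : Fin N → Bool,
    if 0 < p w ∧ W ∈ G w then
      (p w / p W) * (1 / ((G w).card : ℝ)) * (∑ i, ell N w i * yObs N Y1 Y0 W i) ^ 2
    else 0

/-- An assignment on `4k` units is matched iff exactly one unit in each pair
`{2j, 2j+1}` (0-indexed) is treated. -/
def matchedMP (k : ℕ) (w : Fin (4 * k) → Bool) : Prop :=
  ∀ j : Fin (2 * k),
    w ⟨2 * j.1, by have := j.2; omega⟩ ≠ w ⟨2 * j.1 + 1, by have := j.2; omega⟩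

/-- The matched-pair design: each matched assignment has probability `2^{−N/2}`. -/
def pMP (k : ℕ) (w : Fin (4 * k) → Bool) : ℝ :=
  if matchedMP k w then ((1 : ℝ) / 2) ^ (2 * k) else 0

/-- The full set of substitutes of `w` under the matched-pair design:
all `w̃ ∈ 𝒲` with `|T(w̃) ∩ T(w)| = N/4` and `|T(w̃) ∩ T(w)ᶜ| = N/4`. -/
def GstarMP (k : ℕ) (w : Fin (4 * k) → Bool) : Finset (Fin (4 * k) → Bool) :=
  univ.filter fun w' =>
    0 < pMP k w' ∧ (Tset (4 * k) w' ∩ Tset (4 * k) w).card = k ∧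
      (Tset (4 * k) w' ∩ (Tset (4 * k) w)ᶜ).card = k

/-- Treated-minus-control observed difference in pair `j`:
`d_j = (2·W_{2j−1} − 1)·(y_{2j−1}(W) − y_{2j}(W))` (1-indexed). -/
def dPair (k : ℕ) (Y1 Y0 : Fin (4 * k) → ℝ) (W : Fin (4 * k) → Bool)
    (j : Fin (2 * k)) : ℝ :=
  (2 * (if W ⟨2 * j.1, by have := j.2; omega⟩ then (1 : ℝ) else 0) - 1) *
    (yObs (4 * k) Y1 Y0 W ⟨2 * j.1, by have := j.2; omega⟩ -
      yObs (4 * k) Y1 Y0 W ⟨2 * j.1 + 1, by have := j.2; omega⟩)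


namespace CA


lemma sum_range_pair {M : Type*} [AddCommMonoid M] (m : ℕ) (g : ℕ → M) :
    ∑ i ∈ Finset.range (2*m), g i = ∑ j ∈ Finset.range m, (g (2*j) + g (2*j+1)) := by
  induction m with
  | zero => simp
  | succ n ih =>
    rw [show 2*(n+1) = 2*n+1+1 by ring, Finset.sum_range_succ, Finset.sum_range_succ,
      Finset.sum_range_succ, ih, add_assoc]

lemma sum_pair {M : Type*} [AddCommMonoid M] (m n : ℕ) (hn : n = 2*m) (f : Fin n → M) :
    ∑ i, f i = ∑ j : Fin m, (f ⟨2*j.1, by omega⟩ + f ⟨2*j.1+1, by omega⟩) := by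
  subst hn
  set g : ℕ → M := fun i => if h : i < 2*m then f ⟨i, h⟩ else 0 with hg
  have h1 : ∑ i, f i = ∑ i ∈ Finset.range (2*m), g i := by
    rw [← Fin.sum_univ_eq_sum_range]
    refine Finset.sum_congr rfl fun i _ => ?_
    simp only [hg, i.2, dif_pos, Fin.eta]
  have h2 : ∑ j : Fin m, (f ⟨2*j.1, by omega⟩ + f ⟨2*j.1+1, by omega⟩)
      = ∑ j ∈ Finset.range m, (g (2*j) + g (2*j+1)) := by
    rw [← Fin.sum_univ_eq_sum_range (fun j => g (2*j) + g (2*j+1))]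
    refine Finset.sum_congr rfl fun j _ => ?_
    have hj1 : 2*(j:ℕ) < 2*m := by omega
    have hj2 : 2*(j:ℕ)+1 < 2*m := by omega
    simp only [hg, hj1, hj2, dif_pos]
  rw [h1, h2, sum_range_pair]

lemma count_mem {α : Type*} [DecidableEq α] (s : Finset α) (n : ℕ) (j : α) (hj : j ∈ s) :
    ((Finset.powersetCard (n+1) s).filter (fun A => j ∈ A)).card
      = Nat.choose (s.card - 1) n := by
  rw [← Finset.card_erase_of_mem hj, ← Finset.card_powersetCard n (s.erase j)]
  refine Finset.card_nbij' (fun A => A.erase j) (fun B => insert j B) ?_ ?_ ?_ ?_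
  · intro A hA
    simp only [Finset.mem_coe, Finset.mem_filter, Finset.mem_powersetCard] at hA
    obtain ⟨⟨hsub, hcard⟩, hjA⟩ := hA
    simp only [Finset.mem_coe, Finset.mem_powersetCard]
    exact ⟨Finset.erase_subset_erase _ hsub, by rw [Finset.card_erase_of_mem hjA, hcard]; omega⟩
  · intro B hB
    simp only [Finset.mem_coe, Finset.mem_powersetCard] at hB
    obtain ⟨hsub, hcard⟩ := hB
    have hjB : j ∉ B := fun h => (Finset.mem_erase.1 (hsub h)).1 rfl
    simp only [Finset.mem_coe, Finset.mem_filter, Finset.mem_powersetCard]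
    refine ⟨⟨?_, ?_⟩, Finset.mem_insert_self _ _⟩
    · exact Finset.insert_subset hj (hsub.trans (Finset.erase_subset _ _))
    · rw [Finset.card_insert_of_notMem hjB, hcard]
  · intro A hA
    simp only [Finset.mem_coe, Finset.mem_filter] at hA
    exact Finset.insert_erase hA.2
  · intro B hB
    simp only [Finset.mem_coe, Finset.mem_powersetCard] at hB
    have hjB : j ∉ B := fun h => (Finset.mem_erase.1 (hB.1 h)).1 rfl
    exact Finset.erase_insert hjB

lemma count_mem2 {α : Type*} [DecidableEq α] (s : Finset α) (n : ℕ) (j j' : α)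
    (hj : j ∈ s) (hj' : j' ∈ s) (hne : j ≠ j') :
    ((Finset.powersetCard (n+2) s).filter (fun A => j ∈ A ∧ j' ∈ A)).card
      = Nat.choose (s.card - 2) n := by
  have key : ((Finset.powersetCard (n+1) (s.erase j)).filter (fun B => j' ∈ B)).card
      = Nat.choose ((s.erase j).card - 1) n :=
    count_mem (s.erase j) n j' (Finset.mem_erase.2 ⟨Ne.symm hne, hj'⟩)
  have hc : (s.erase j).card - 1 = s.card - 2 := by
    rw [Finset.card_erase_of_mem hj]; omega
  rw [← hc, ← key]
  refine Finset.card_nbij' (fun A => A.erase j) (fun B => insert j B) ?_ ?_ ?_ ?_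
  · intro A hA
    simp only [Finset.mem_coe, Finset.mem_filter, Finset.mem_powersetCard] at hA ⊢
    obtain ⟨⟨hsub, hcard⟩, hjA, hj'A⟩ := hA
    exact ⟨⟨Finset.erase_subset_erase _ hsub,
      by rw [Finset.card_erase_of_mem hjA, hcard]; omega⟩,
      Finset.mem_erase.2 ⟨Ne.symm hne, hj'A⟩⟩
  · intro B hB
    simp only [Finset.mem_coe, Finset.mem_filter, Finset.mem_powersetCard] at hB ⊢
    obtain ⟨⟨hsub, hcard⟩, hj'B⟩ := hB
    have hjB : j ∉ B := fun h => (Finset.mem_erase.1 (hsub h)).1 rfl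
    refine ⟨⟨Finset.insert_subset hj (hsub.trans (Finset.erase_subset _ _)), ?_⟩,
      Finset.mem_insert_self _ _, Finset.mem_insert_of_mem hj'B⟩
    rw [Finset.card_insert_of_notMem hjB, hcard]
  · intro A hA
    simp only [Finset.mem_coe, Finset.mem_filter] at hA
    exact Finset.insert_erase hA.2.1
  · intro B hB
    simp only [Finset.mem_coe, Finset.mem_filter, Finset.mem_powersetCard] at hB
    have hjB : j ∉ B := fun h => (Finset.mem_erase.1 (hB.1.1 h)).1 rfl
    exact Finset.erase_insert hjB

lemma partB (k : ℕ) (hk : 1 ≤ k) (d : Fin (2*k) → ℝ) :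
    (2*(k:ℝ) - 1) * ∑ A ∈ Finset.powersetCard k (univ : Finset (Fin (2*k))),
        (∑ j, (if j ∈ A then (1:ℝ) else -1) * d j)^2
      = ((Nat.choose (2*k) k : ℝ)) * (2*(k:ℝ) * (∑ j, (d j)^2) - (∑ j, d j)^2) := by
  classical
  set P := Finset.powersetCard k (univ : Finset (Fin (2*k))) with hP
  set C : ℕ := Nat.choose (2*k) k with hC
  set n1 : ℕ := Nat.choose (2*k-1) (k-1) with hn1def
  set n2 : ℕ := if 2 ≤ k then Nat.choose (2*k-2) (k-2) else 0 with hn2def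
  have hcardP : P.card = C := by
    rw [hP, Finset.card_powersetCard, Finset.card_univ, Fintype.card_fin]
  -- counting facts
  have hcount1 : ∀ j : Fin (2*k), (P.filter (fun A => j ∈ A)).card = n1 := by
    intro j
    have h := count_mem (univ : Finset (Fin (2*k))) (k-1) j (Finset.mem_univ j)
    rw [show k-1+1 = k from by omega, Finset.card_univ, Fintype.card_fin] at h
    rw [hP, h]
  have hcount2 : ∀ j j' : Fin (2*k), j ≠ j' →
      (P.filter (fun A => j ∈ A ∧ j' ∈ A)).card = n2 := by
    intro j j' hne
    by_cases h2 : 2 ≤ k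
    · have h := count_mem2 (univ : Finset (Fin (2*k))) (k-2) j j'
        (Finset.mem_univ j) (Finset.mem_univ j') hne
      rw [show k-2+2 = k from by omega, Finset.card_univ, Fintype.card_fin] at h
      rw [hP, h, hn2def, if_pos h2]
    · have hk1 : k = 1 := by omega
      rw [hn2def, if_neg h2, Finset.card_eq_zero]
      rw [Finset.filter_eq_empty_iff]
      intro A hA
      rw [hP, Finset.mem_powersetCard] at hA
      rintro ⟨hjA, hj'A⟩
      have : ({j, j'} : Finset (Fin (2*k))).card ≤ A.card :=
        Finset.card_le_card (by intro x hx; rcases Finset.mem_insert.1 hx with h | h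
                                · subst h; exact hjA
                                · rw [Finset.mem_singleton.1 h]; exact hj'A)
      rw [Finset.card_insert_of_notMem (by simpa using hne), Finset.card_singleton,
        hA.2, hk1] at this
      omega
  -- nat identities
  have hA1 : 2 * n1 = C := by
    have h := Nat.add_one_mul_choose_eq (2*k-1) (k-1)
    have e1 : 2*k-1+1 = 2*k := by omega
    have e2 : k-1+1 = k := by omega
    rw [e1, e2] at h
    -- h : 2*k * choose (2*k-1) (k-1) = choose (2*k) k * k
    have : k * (2 * n1) = k * C := by
      rw [hn1def, hC]; nlinarith [h]
    exact Nat.eq_of_mul_eq_mul_left (by omega) this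
  have hA2 : 2 * (2*k - 1) * n2 = (k-1) * C := by
    by_cases h2 : 2 ≤ k
    · have h := Nat.add_one_mul_choose_eq (2*k-2) (k-2)
      have e1 : 2*k-2+1 = 2*k-1 := by omega
      have e2 : k-2+1 = k-1 := by omega
      rw [e1, e2] at h
      -- h : (2*k-1) * choose (2*k-2) (k-2) = choose (2*k-1) (k-1) * (k-1)
      rw [hn2def, if_pos h2]
      calc 2 * (2*k-1) * Nat.choose (2*k-2) (k-2)
          = 2 * ((2*k-1) * Nat.choose (2*k-2) (k-2)) := by ring
        _ = 2 * (Nat.choose (2*k-1) (k-1) * (k-1)) := by rw [h]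
        _ = (k-1) * (2 * n1) := by rw [hn1def]; ring
        _ = (k-1) * C := by rw [hA1]
    · have hk1 : k = 1 := by omega
      subst hk1
      simp [hn2def]
  -- real versions
  have hkR : (1:ℝ) ≤ (k:ℝ) := by exact_mod_cast hk
  have hA1R : 2 * (n1:ℝ) = (C:ℝ) := by exact_mod_cast hA1
  have hA2R : 2 * (2*(k:ℝ) - 1) * (n2:ℝ) = ((k:ℝ)-1) * (C:ℝ) := by
    have := hA2
    have h1 : ((2*k-1 : ℕ):ℝ) = 2*(k:ℝ)-1 := by
      push_cast [Nat.cast_sub (by omega : 1 ≤ 2*k)]; ring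
    have h2 : ((k-1 : ℕ):ℝ) = (k:ℝ)-1 := by
      push_cast [Nat.cast_sub hk]; ring
    calc 2 * (2*(k:ℝ) - 1) * (n2:ℝ) = ((2 * (2*k-1) * n2 : ℕ) : ℝ) := by
          push_cast [h1]; ring
      _ = (((k-1) * C : ℕ):ℝ) := by rw [hA2]
      _ = ((k:ℝ)-1) * (C:ℝ) := by push_cast [h2]; ring
  -- expand the square
  have hexp : ∑ A ∈ P, (∑ j, (if j ∈ A then (1:ℝ) else -1) * d j)^2
      = ∑ j : Fin (2*k), ∑ j' : Fin (2*k),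
          (d j * d j') * ∑ A ∈ P, (if j ∈ A then (1:ℝ) else -1) * (if j' ∈ A then (1:ℝ) else -1) := by
    have h1 : ∀ A ∈ P, (∑ j, (if j ∈ A then (1:ℝ) else -1) * d j)^2
        = ∑ j : Fin (2*k), ∑ j' : Fin (2*k),
            (d j * d j') * ((if j ∈ A then (1:ℝ) else -1) * (if j' ∈ A then (1:ℝ) else -1)) := by
      intro A _
      rw [sq, Finset.sum_mul_sum]
      exact Finset.sum_congr rfl fun j _ => Finset.sum_congr rfl fun j' _ => by ring
    rw [Finset.sum_congr rfl h1, Finset.sum_comm]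
    refine Finset.sum_congr rfl fun j _ => ?_
    rw [Finset.sum_comm]
    refine Finset.sum_congr rfl fun j' _ => ?_
    rw [← Finset.mul_sum]
  -- inner sums
  have hinner : ∀ j j' : Fin (2*k),
      ∑ A ∈ P, (if j ∈ A then (1:ℝ) else -1) * (if j' ∈ A then (1:ℝ) else -1)
        = if j = j' then (C:ℝ) else (4*(n2:ℝ) - 4*(n1:ℝ) + (C:ℝ)) := by
    intro j j'
    by_cases hjj : j = j'
    · subst hjj
      rw [if_pos rfl]
      have : ∀ A ∈ P, (if j ∈ A then (1:ℝ) else -1) * (if j ∈ A then (1:ℝ) else -1) = 1 := by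
        intro A _; by_cases h : j ∈ A <;> simp [h]
      rw [Finset.sum_congr rfl this, Finset.sum_const, hcardP, nsmul_eq_mul, mul_one]
    · rw [if_neg hjj]
      have hptw : ∀ A ∈ P, (if j ∈ A then (1:ℝ) else -1) * (if j' ∈ A then (1:ℝ) else -1)
          = 4 * (if j ∈ A ∧ j' ∈ A then (1:ℝ) else 0)
            - 2 * (if j ∈ A then (1:ℝ) else 0) - 2 * (if j' ∈ A then (1:ℝ) else 0) + 1 := by
        intro A _
        by_cases h1 : j ∈ A <;> by_cases h2 : j' ∈ A <;> simp [h1, h2] <;> norm_num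
      rw [Finset.sum_congr rfl hptw]
      rw [Finset.sum_add_distrib, Finset.sum_sub_distrib, Finset.sum_sub_distrib,
        ← Finset.mul_sum, ← Finset.mul_sum, ← Finset.mul_sum,
        Finset.sum_boole, Finset.sum_boole, Finset.sum_boole,
        Finset.sum_const, nsmul_eq_mul, mul_one]
      rw [hcount1 j, hcount1 j', hcount2 j j' hjj, hcardP]
      ring
  -- combine
  rw [hexp]
  have hsplit : ∑ j : Fin (2*k), ∑ j' : Fin (2*k),
      (d j * d j') * (if j = j' then (C:ℝ) else (4*(n2:ℝ) - 4*(n1:ℝ) + (C:ℝ)))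
      = (4*(n2:ℝ) - 4*(n1:ℝ) + (C:ℝ)) * (∑ j, d j)^2
        + ((C:ℝ) - (4*(n2:ℝ) - 4*(n1:ℝ) + (C:ℝ))) * ∑ j, (d j)^2 := by
    set c2 : ℝ := 4*(n2:ℝ) - 4*(n1:ℝ) + (C:ℝ) with hc2
    have hptw : ∀ j j' : Fin (2*k), (d j * d j') * (if j = j' then (C:ℝ) else c2)
        = c2 * (d j * d j') + (if j' = j then ((C:ℝ) - c2) * (d j * d j') else 0) := by
      intro j j'
      by_cases h : j = j'
      · subst h; simp; ring
      · rw [if_neg h, if_neg (Ne.symm h)]; ring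
    calc ∑ j : Fin (2*k), ∑ j' : Fin (2*k), (d j * d j') * (if j = j' then (C:ℝ) else c2)
        = ∑ j : Fin (2*k), (∑ j' : Fin (2*k), c2 * (d j * d j')
            + ((C:ℝ) - c2) * (d j * d j)) := by
          refine Finset.sum_congr rfl fun j _ => ?_
          rw [Finset.sum_congr rfl fun j' _ => hptw j j', Finset.sum_add_distrib,
            Finset.sum_ite_eq' (univ : Finset (Fin (2*k))) j
              (fun j' => ((C:ℝ) - c2) * (d j * d j')), if_pos (Finset.mem_univ j)]
      _ = c2 * (∑ j, d j)^2 + ((C:ℝ) - c2) * ∑ j, (d j)^2 := by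
          rw [Finset.sum_add_distrib]
          congr 1
          · rw [sq, Finset.sum_mul_sum, Finset.mul_sum]
            exact Finset.sum_congr rfl fun j _ => by rw [Finset.mul_sum]
          · rw [Finset.mul_sum]
            exact Finset.sum_congr rfl fun j _ => by rw [sq]
  have : ∑ j : Fin (2*k), ∑ j' : Fin (2*k), (d j * d j')
        * ∑ A ∈ P, (if j ∈ A then (1:ℝ) else -1) * (if j' ∈ A then (1:ℝ) else -1)
      = ∑ j : Fin (2*k), ∑ j' : Fin (2*k),
        (d j * d j') * (if j = j' then (C:ℝ) else (4*(n2:ℝ) - 4*(n1:ℝ) + (C:ℝ))) := by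
    exact Finset.sum_congr rfl fun j _ => Finset.sum_congr rfl fun j' _ => by rw [hinner]
  rw [this, hsplit]
  -- final algebra
  have hcOff : (2*(k:ℝ) - 1) * (4*(n2:ℝ) - 4*(n1:ℝ) + (C:ℝ)) = -(C:ℝ) := by
    linear_combination 2*hA2R - 2*(2*(k:ℝ)-1)*hA1R
  linear_combination ((∑ j, d j)^2 - ∑ j, (d j)^2) * hcOff




def u2 (k : ℕ) (j : Fin (2*k)) : Fin (4*k) := ⟨2*j.1, by have := j.2; omega⟩
def u2' (k : ℕ) (j : Fin (2*k)) : Fin (4*k) := ⟨2*j.1+1, by have := j.2; omega⟩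
def pIdx (k : ℕ) (i : Fin (4*k)) : Fin (2*k) := ⟨i.1/2, by have := i.2; omega⟩

def agree (k : ℕ) (b w : Fin (4*k) → Bool) : Finset (Fin (2*k)) :=
  univ.filter fun j => w (u2 k j) = b (u2 k j)

def wOf (k : ℕ) (b : Fin (4*k) → Bool) (A : Finset (Fin (2*k))) : Fin (4*k) → Bool :=
  fun i => if pIdx k i ∈ A then b i else !(b i)

lemma matched_odd {k : ℕ} {w : Fin (4*k) → Bool} (hw : matchedMP k w) (j : Fin (2*k)) :
    w (u2' k j) = ! w (u2 k j) := by
  have h : w (u2 k j) ≠ w (u2' k j) := hw j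
  cases hx : w (u2 k j) <;> cases hy : w (u2' k j) <;> simp_all [u2, u2']

lemma pMP_pos {k : ℕ} {w : Fin (4*k) → Bool} : 0 < pMP k w ↔ matchedMP k w := by
  by_cases h : matchedMP k w <;> simp [pMP, h]

lemma pIdx_u2 (k : ℕ) (j : Fin (2*k)) : pIdx k (u2 k j) = j := by
  apply Fin.ext
  show (2*j.1)/2 = j.1
  omega

lemma pIdx_u2' (k : ℕ) (j : Fin (2*k)) : pIdx k (u2' k j) = j := by
  apply Fin.ext
  show (2*j.1+1)/2 = j.1
  omega

lemma wOf_u2 (k : ℕ) (b : Fin (4*k) → Bool) (A : Finset (Fin (2*k))) (j : Fin (2*k)) :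
    wOf k b A (u2 k j) = if j ∈ A then b (u2 k j) else !(b (u2 k j)) := by
  unfold wOf; rw [pIdx_u2]

lemma wOf_u2' (k : ℕ) (b : Fin (4*k) → Bool) (A : Finset (Fin (2*k))) (j : Fin (2*k)) :
    wOf k b A (u2' k j) = if j ∈ A then b (u2' k j) else !(b (u2' k j)) := by
  unfold wOf; rw [pIdx_u2']

lemma mem_agree {k : ℕ} {b w : Fin (4*k) → Bool} {j : Fin (2*k)} :
    j ∈ agree k b w ↔ w (u2 k j) = b (u2 k j) := by simp [agree]

lemma matched_wOf {k : ℕ} {b : Fin (4*k) → Bool} (hb : matchedMP k b)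
    (A : Finset (Fin (2*k))) : matchedMP k (wOf k b A) := by
  intro j
  show wOf k b A (u2 k j) ≠ wOf k b A (u2' k j)
  rw [wOf_u2, wOf_u2', matched_odd hb]
  by_cases h : j ∈ A <;> cases hx : b (u2 k j) <;> simp [h, hx]

lemma wOf_agree {k : ℕ} {b w : Fin (4*k) → Bool} (hb : matchedMP k b)
    (hw : matchedMP k w) : wOf k b (agree k b w) = w := by
  funext i
  obtain ⟨j, hi⟩ : ∃ j : Fin (2*k), i = u2 k j ∨ i = u2' k j := by
    refine ⟨pIdx k i, ?_⟩
    have h2 : i.1 = 2*(i.1/2) ∨ i.1 = 2*(i.1/2)+1 := by omega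
    rcases h2 with h | h
    · left; exact Fin.ext h
    · right; exact Fin.ext h
  rcases hi with h | h
  · rw [h, wOf_u2]
    by_cases hm : j ∈ agree k b w
    · rw [if_pos hm]; exact (mem_agree.1 hm).symm
    · rw [if_neg hm]
      have hne : w (u2 k j) ≠ b (u2 k j) := fun hh => hm (mem_agree.2 hh)
      cases hx : w (u2 k j) <;> cases hy : b (u2 k j) <;> simp_all
  · rw [h, wOf_u2', matched_odd hb, matched_odd hw]
    by_cases hm : j ∈ agree k b w
    · rw [if_pos hm, mem_agree.1 hm]
    · rw [if_neg hm]
      have hne : w (u2 k j) ≠ b (u2 k j) := fun hh => hm (mem_agree.2 hh)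
      cases hx : w (u2 k j) <;> cases hy : b (u2 k j) <;> simp_all

lemma agree_wOf (k : ℕ) (b : Fin (4*k) → Bool) (A : Finset (Fin (2*k))) :
    agree k b (wOf k b A) = A := by
  ext j
  rw [mem_agree, wOf_u2]
  by_cases h : j ∈ A
  · simp [h]
  · simp only [h, if_false, iff_false]
    cases b (u2 k j) <;> simp

lemma agree_comm (k : ℕ) (b w : Fin (4*k) → Bool) : agree k b w = agree k w b := by
  ext j; simp [agree, eq_comm]

lemma card_eq_sum_ind {n : ℕ} (S : Finset (Fin n)) :
    S.card = ∑ i : Fin n, if i ∈ S then 1 else 0 :=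
  calc S.card = (univ.filter (· ∈ S)).card := by rw [Finset.filter_univ_mem]
    _ = ∑ i, if i ∈ S then 1 else 0 := Finset.card_filter _ _

lemma card_inter {k : ℕ} {b w : Fin (4*k) → Bool} (hb : matchedMP k b)
    (hw : matchedMP k w) :
    (Tset (4*k) w ∩ Tset (4*k) b).card = (agree k b w).card := by
  rw [card_eq_sum_ind, card_eq_sum_ind, sum_pair (2*k) (4*k) (by ring)]
  refine Finset.sum_congr rfl fun j _ => ?_
  show (if u2 k j ∈ Tset (4*k) w ∩ Tset (4*k) b then 1 else 0)
      + (if u2' k j ∈ Tset (4*k) w ∩ Tset (4*k) b then 1 else 0)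
      = if j ∈ agree k b w then 1 else 0
  have e1 := matched_odd hw j
  have e2 := matched_odd hb j
  simp only [Tset, Finset.mem_inter, Finset.mem_filter, Finset.mem_univ, true_and,
    mem_agree, e1, e2]
  cases hx : w (u2 k j) <;> cases hy : b (u2 k j) <;> simp [hx, hy]

lemma card_inter_compl {k : ℕ} {b w : Fin (4*k) → Bool} (hb : matchedMP k b)
    (hw : matchedMP k w) :
    (Tset (4*k) w ∩ (Tset (4*k) b)ᶜ).card + (agree k b w).card = 2*k := by
  rw [card_eq_sum_ind (Tset (4*k) w ∩ (Tset (4*k) b)ᶜ), card_eq_sum_ind (agree k b w),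
    sum_pair (2*k) (4*k) (by ring), ← Finset.sum_add_distrib]
  have hone : ∑ _j : Fin (2*k), (1:ℕ) = 2*k := by
    rw [Finset.sum_const, Finset.card_univ, Fintype.card_fin, smul_eq_mul, mul_one]
  refine Eq.trans ?_ hone
  refine Finset.sum_congr rfl fun j _ => ?_
  show ((if u2 k j ∈ Tset (4*k) w ∩ (Tset (4*k) b)ᶜ then 1 else 0)
      + (if u2' k j ∈ Tset (4*k) w ∩ (Tset (4*k) b)ᶜ then 1 else 0))
      + (if j ∈ agree k b w then 1 else 0) = 1
  have e1 := matched_odd hw j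
  have e2 := matched_odd hb j
  simp only [Tset, Finset.mem_inter, Finset.mem_compl, Finset.mem_filter, Finset.mem_univ,
    true_and, mem_agree, e1, e2]
  cases hx : w (u2 k j) <;> cases hy : b (u2 k j) <;> simp [hx, hy]

lemma mem_Gstar_iff {k : ℕ} {b : Fin (4*k) → Bool} (hb : matchedMP k b)
    (w : Fin (4*k) → Bool) :
    w ∈ GstarMP k b ↔ matchedMP k w ∧ (agree k b w).card = k := by
  unfold GstarMP
  rw [Finset.mem_filter]
  simp only [Finset.mem_univ, true_and, pMP_pos]
  constructor
  · rintro ⟨hw, h1, _⟩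
    exact ⟨hw, by rw [← card_inter hb hw]; exact h1⟩
  · rintro ⟨hw, hA⟩
    have h2 := card_inter_compl hb hw
    exact ⟨hw, by rw [card_inter hb hw, hA], by omega⟩

lemma card_Gstar {k : ℕ} {b : Fin (4*k) → Bool} (hb : matchedMP k b) :
    (GstarMP k b).card = Nat.choose (2*k) k := by
  have hP : (Finset.powersetCard k (univ : Finset (Fin (2*k)))).card = (2*k).choose k := by
    rw [Finset.card_powersetCard, Finset.card_univ, Fintype.card_fin]
  rw [← hP]
  refine Finset.card_nbij' (fun w => agree k b w) (fun A => wOf k b A) ?_ ?_ ?_ ?_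
  · intro w hw
    rw [Finset.mem_coe, mem_Gstar_iff hb] at hw
    exact Finset.mem_powersetCard.2 ⟨Finset.subset_univ _, hw.2⟩
  · intro A hA
    rw [Finset.mem_coe, Finset.mem_powersetCard] at hA
    rw [Finset.mem_coe, mem_Gstar_iff hb]
    exact ⟨matched_wOf hb A, by rw [agree_wOf]; exact hA.2⟩
  · intro w hw
    exact wOf_agree hb ((mem_Gstar_iff hb w).1 hw).1
  · intro A _
    exact agree_wOf k b A

lemma inner_sum (k : ℕ) (Y1 Y0 : Fin (4*k) → ℝ) {W w : Fin (4*k) → Bool}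
    (_hW : matchedMP k W) (hw : matchedMP k w) :
    ∑ i, ell (4*k) w i * yObs (4*k) Y1 Y0 W i
      = ∑ j : Fin (2*k), (if j ∈ agree k W w then (1:ℝ) else -1) * dPair k Y1 Y0 W j := by
  rw [sum_pair (2*k) (4*k) (by ring)]
  refine Finset.sum_congr rfl fun j _ => ?_
  show ell (4*k) w (u2 k j) * yObs (4*k) Y1 Y0 W (u2 k j)
      + ell (4*k) w (u2' k j) * yObs (4*k) Y1 Y0 W (u2' k j) = _
  have hd : dPair k Y1 Y0 W j = (2 * (if W (u2 k j) then (1:ℝ) else 0) - 1) *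
      (yObs (4*k) Y1 Y0 W (u2 k j) - yObs (4*k) Y1 Y0 W (u2' k j)) := rfl
  rw [hd]
  have e1 := matched_odd hw j
  unfold ell
  rw [e1]
  by_cases hmem : j ∈ agree k W w
  · rw [if_pos hmem, mem_agree.1 hmem]
    cases hWv : W (u2 k j) <;> simp [hWv] <;> ring
  · rw [if_neg hmem]
    have hne : w (u2 k j) ≠ W (u2 k j) := fun hh => hmem (mem_agree.2 hh)
    cases hWv : W (u2 k j) <;> cases hwv : w (u2 k j) <;> simp_all <;> ring


end CA

/-- Theorem 3: under the matched-pair design on `N = 4k` units, the contrast variance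
estimator with the full set of substitutes equals the standard matched-pair variance
estimator `V̂_pair(W) = (4/(N(N−2)))·Σ_j (d_j − d̄)²`. -/
theorem contrast_equals_pair
    (k : ℕ) (hk : 1 ≤ k) (Y1 Y0 : Fin (4 * k) → ℝ)
    (W : Fin (4 * k) → Bool) (hW : 0 < pMP k W) :
    Vsub (4 * k) (pMP k) Y1 Y0 (GstarMP k) W =
      (4 / (((4 * k : ℕ) : ℝ) * (((4 * k : ℕ) : ℝ) - 2))) *
        ∑ j : Fin (2 * k),
          (dPair k Y1 Y0 W j -
            (2 / ((4 * k : ℕ) : ℝ)) * ∑ j' : Fin (2 * k), dPair k Y1 Y0 W j') ^ 2 := by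
  classical
  have hWm : matchedMP k W := CA.pMP_pos.1 hW
  have hkR : (1:ℝ) ≤ (k:ℝ) := by exact_mod_cast hk
  have hC : (0:ℝ) < ((2*k).choose k : ℝ) := by
    exact_mod_cast Nat.choose_pos (by omega : k ≤ 2*k)
  have hCne : ((2*k).choose k : ℝ) ≠ 0 := ne_of_gt hC
  have hcond : ∀ w : Fin (4*k) → Bool,
      (0 < pMP k w ∧ W ∈ GstarMP k w) ↔ w ∈ GstarMP k W := by
    intro w
    constructor
    · rintro ⟨hpw, hmem⟩
      have hwm := CA.pMP_pos.1 hpw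
      rw [CA.mem_Gstar_iff hwm] at hmem
      rw [CA.mem_Gstar_iff hWm]
      exact ⟨hwm, by rw [CA.agree_comm]; exact hmem.2⟩
    · intro hmem
      have h := (CA.mem_Gstar_iff hWm w).1 hmem
      refine ⟨CA.pMP_pos.2 h.1, ?_⟩
      rw [CA.mem_Gstar_iff h.1]
      exact ⟨hWm, by rw [CA.agree_comm]; exact h.2⟩
  unfold Vsub
  have hS1 : (∑ w : Fin (4*k) → Bool, if 0 < pMP k w ∧ W ∈ GstarMP k w then
        (pMP k w / pMP k W) * (1 / ((GstarMP k w).card : ℝ))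
          * (∑ i, ell (4*k) w i * yObs (4*k) Y1 Y0 W i) ^ 2 else 0)
      = ∑ w ∈ GstarMP k W, (1/(((2*k).choose k : ℕ) : ℝ)) *
          (∑ j : Fin (2*k), (if j ∈ CA.agree k W w then (1:ℝ) else -1)
            * dPair k Y1 Y0 W j)^2 := by
    rw [Finset.sum_congr rfl (fun w _ => if_congr (hcond w) rfl rfl),
      Finset.sum_ite_mem, Finset.univ_inter]
    refine Finset.sum_congr rfl fun w hw => ?_
    have hwm : matchedMP k w := ((CA.mem_Gstar_iff hWm w).1 hw).1
    have hpw : pMP k w = ((1:ℝ)/2)^(2*k) := by simp [pMP, hwm]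
    have hpW : pMP k W = ((1:ℝ)/2)^(2*k) := by simp [pMP, hWm]
    have hdiv : pMP k w / pMP k W = 1 := by
      rw [hpw, hpW, div_self (by positivity)]
    rw [hdiv, CA.card_Gstar hwm, CA.inner_sum k Y1 Y0 hWm hwm, one_mul]
  rw [hS1]
  have hS2 : (∑ w ∈ GstarMP k W, (1/(((2*k).choose k : ℕ) : ℝ)) *
          (∑ j : Fin (2*k), (if j ∈ CA.agree k W w then (1:ℝ) else -1)
            * dPair k Y1 Y0 W j)^2)
      = ∑ A ∈ Finset.powersetCard k (univ : Finset (Fin (2*k))),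
          (1/(((2*k).choose k : ℕ) : ℝ)) *
          (∑ j : Fin (2*k), (if j ∈ A then (1:ℝ) else -1) * dPair k Y1 Y0 W j)^2 := by
    refine Finset.sum_nbij' (fun w => CA.agree k W w) (fun A => CA.wOf k W A)
      ?_ ?_ ?_ ?_ ?_
    · intro w hw
      rw [CA.mem_Gstar_iff hWm] at hw
      exact Finset.mem_powersetCard.2 ⟨Finset.subset_univ _, hw.2⟩
    · intro A hA
      rw [Finset.mem_powersetCard] at hA
      rw [CA.mem_Gstar_iff hWm]
      exact ⟨CA.matched_wOf hWm A, by rw [CA.agree_wOf]; exact hA.2⟩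
    · intro w hw
      exact CA.wOf_agree hWm ((CA.mem_Gstar_iff hWm w).1 hw).1
    · intro A _
      exact CA.agree_wOf k W A
    · intro w _
      rfl
  rw [hS2, ← Finset.mul_sum]
  have hpB : (2*(k:ℝ) - 1) * ∑ A ∈ Finset.powersetCard k (univ : Finset (Fin (2*k))),
        (∑ j : Fin (2*k), (if j ∈ A then (1:ℝ) else -1) * dPair k Y1 Y0 W j)^2
      = (((2*k).choose k : ℕ) : ℝ) * (2*(k:ℝ) * (∑ j : Fin (2*k), (dPair k Y1 Y0 W j)^2)
          - (∑ j : Fin (2*k), dPair k Y1 Y0 W j)^2) :=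
    CA.partB k hk _
  have h2k : (2*(k:ℝ) - 1) ≠ 0 := by nlinarith
  have hT : (∑ A ∈ Finset.powersetCard k (univ : Finset (Fin (2*k))),
        (∑ j : Fin (2*k), (if j ∈ A then (1:ℝ) else -1) * dPair k Y1 Y0 W j)^2)
      = (((2*k).choose k : ℕ) : ℝ) * (2*(k:ℝ) * (∑ j : Fin (2*k), (dPair k Y1 Y0 W j)^2)
          - (∑ j : Fin (2*k), dPair k Y1 Y0 W j)^2) / (2*(k:ℝ) - 1) := by
    rw [eq_div_iff h2k]
    linear_combination hpB
  rw [hT]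
  have hsq : ∀ e : ℝ, ∑ j : Fin (2*k), (dPair k Y1 Y0 W j - e)^2
      = (∑ j : Fin (2*k), (dPair k Y1 Y0 W j)^2)
        - 2*e*(∑ j : Fin (2*k), dPair k Y1 Y0 W j) + (2*(k:ℝ))*e^2 := by
    intro e
    have h : ∀ j : Fin (2*k), (dPair k Y1 Y0 W j - e)^2
        = (dPair k Y1 Y0 W j)^2 - 2*e*(dPair k Y1 Y0 W j) + e^2 := fun j => by ring
    rw [Finset.sum_congr rfl fun j _ => h j, Finset.sum_add_distrib,
      Finset.sum_sub_distrib, ← Finset.mul_sum, Finset.sum_const, Finset.card_univ,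
      Fintype.card_fin, nsmul_eq_mul]
    push_cast
    ring
  rw [hsq]
  have hc4 : ((4*k : ℕ) : ℝ) = 4*(k:ℝ) := by push_cast; ring
  rw [hc4]
  have hk0 : (k:ℝ) ≠ 0 := by nlinarith
  have h4k2 : (4*(k:ℝ) - 2) ≠ 0 := by nlinarith
  field_simp
  have hinv : (-1 + (k:ℝ) * 2) * (-1 + (k:ℝ) * 2)⁻¹ = 1 :=
    mul_inv_cancel₀ (by contrapose! h2k; linarith)
  linear_combination (16 * (k:ℝ) * (∑ x : Fin (2*k), dPair k Y1 Y0 W x ^ 2)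
    - 8 * (∑ j : Fin (2*k), dPair k Y1 Y0 W j) ^ 2) * hinv
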